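/- Let H be a real Hilbert space, T : H → H with a nonempty fixed point set, β ∈ (0,1) such that ‖Ty − x*‖² ≤ ‖y − x*‖² − ((1−β)/β)‖y − Ty‖² for all y ∈ H and fixed points x*. Let 0 < ρ < 1/β, θ ∈ [0, min{1/2, (1−βρ)/(1+βρ)}), and δ ≤ 0 satisfy Condition: max{−(1−βρ−θ−βθρ)/(1−βρ), (βρθ(1+θ)−(1−βρ)(1−θ)²)/(1+θ)} < δ and βρθ(1+θ)−(1−βρ)(1−θ)² < (2θ−βρ+2)δ + (1−2βρ)δ². Then the sequence defined by y_n = x_n + θ(x_n − x_{n−1}) + δ(x_{n−1} − x_{n−2}), x_{n+1} = (1−ρ)y_n + ρTy_n is bounded and ‖x_{n+1} − x_n‖ → 0. -/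
import Mathlib


open Filter

set_option maxHeartbeats 1000000

open Filter

open RealInnerProductSpace in
private lemma master_aux {H : Type*} [NormedAddCommGroup H] [InnerProductSpace ℝ H]
    (u0 u1 u2 z : H) (θ δ κ : ℝ) (hθ0 : 0 ≤ θ) (hδ0 : δ ≤ 0) (hκ : 0 ≤ κ)
    (hmain : ‖z‖^2 ≤ ‖u2 + θ•(u2-u1) + δ•(u1-u0)‖^2
      - κ*‖z - (u2 + θ•(u2-u1) + δ•(u1-u0))‖^2) :
    ‖z‖^2 ≤ (1+θ)*‖u2‖^2 + (δ-θ)*‖u1‖^2 - δ*‖u0‖^2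
      - κ*(1-θ+δ)*‖z-u2‖^2 + ((1+θ)*(θ-δ) - κ*(θ^2-θ+θ*δ))*‖u2-u1‖^2
      + (δ*(δ-θ) - κ*(δ^2+δ+θ*δ))*‖u1-u0‖^2 := by
  have exp : ∀ a : H, ‖a‖^2 = ⟪a, a⟫ := fun a => (real_inner_self_eq_norm_sq a).symm
  have h1 : (0:ℝ) ≤ κ*θ*‖(z-u2)-(u2-u1)‖^2 := by positivity
  have h2 : (0:ℝ) ≤ κ*(-δ)*‖(z-u2)+(u1-u0)‖^2 := by
    apply mul_nonneg (mul_nonneg hκ (by linarith)) (sq_nonneg _)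
  have h3 : (0:ℝ) ≤ κ*(θ*(-δ))*‖(u2-u1)-(u1-u0)‖^2 := by
    apply mul_nonneg (mul_nonneg hκ (mul_nonneg hθ0 (by linarith))) (sq_nonneg _)
  have h4 : (0:ℝ) ≤ (1+θ)*(-δ)*‖(u2-u1)+(u1-u0)‖^2 := by
    apply mul_nonneg (mul_nonneg (by linarith) (by linarith)) (sq_nonneg _)
  simp only [exp, inner_add_left, inner_add_right, inner_sub_left, inner_sub_right,
    real_inner_smul_left, real_inner_smul_right] at *
  simp only [real_inner_comm u0 u1, real_inner_comm u0 u2, real_inner_comm u1 u2,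
    real_inner_comm u0 z, real_inner_comm u1 z, real_inner_comm u2 z] at *
  linarith [h1, h2, h3, h4, hmain]

open RealInnerProductSpace in
private lemma step_aux {H : Type*} [NormedAddCommGroup H] [InnerProductSpace ℝ H]
    (T : H → H) (β ρ : ℝ) (hβ0 : 0 < β) (hρ : 0 < ρ)
    (p yy x3 : H) (hp : T p = p)
    (hT : ‖T yy - p‖ ^ 2 ≤ ‖yy - p‖ ^ 2 - ((1 - β) / β) * ‖yy - T yy‖ ^ 2)
    (hx3 : x3 = (1 - ρ) • yy + ρ • T yy) :
    ‖x3 - p‖^2 ≤ ‖yy - p‖^2 - ((1 - β*ρ)/(β*ρ)) * ‖x3 - yy‖^2 := by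
  have hx3y : x3 - yy = ρ • (T yy - yy) := by rw [hx3]; module
  have hx3p : x3 - p = (yy - p) + ρ • (T yy - yy) := by rw [hx3]; module
  have hsm : ∀ (c : ℝ) (v : H), 0 ≤ c → ‖c • v‖^2 = c^2 * ‖v‖^2 := by
    intro c v hc
    rw [norm_smul, Real.norm_eq_abs, mul_pow, sq_abs]
  have e1 : ‖x3 - p‖^2 = ‖yy - p‖^2 + 2*(ρ*⟪yy - p, T yy - yy⟫) + ρ^2*‖T yy - yy‖^2 := by
    rw [hx3p, norm_add_sq_real, real_inner_smul_right, hsm ρ _ hρ.le]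
  have e2 : ‖T yy - p‖^2 = ‖yy - p‖^2 + 2*⟪yy - p, T yy - yy⟫ + ‖T yy - yy‖^2 := by
    have : T yy - p = (yy - p) + (T yy - yy) := by module
    rw [this, norm_add_sq_real]
  have e3 : ‖yy - T yy‖ = ‖T yy - yy‖ := norm_sub_rev _ _
  rw [e3] at hT
  have hI : 2*⟪yy - p, T yy - yy⟫ ≤ -((1 + (1-β)/β)) * ‖T yy - yy‖^2 := by
    nlinarith [e2, hT]
  have key : ((1 - β*ρ)/(β*ρ)) * ‖x3 - yy‖^2
      = ρ*(1+(1-β)/β)*‖T yy - yy‖^2 - ρ^2*‖T yy - yy‖^2 := by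
    rw [hx3y, hsm ρ _ hρ.le]
    field_simp
    ring
  nlinarith [e1, hI, key, sq_nonneg (‖T yy - yy‖), hρ]


theorem stmt16 {H : Type*} [NormedAddCommGroup H] [InnerProductSpace ℝ H] [CompleteSpace H]
    (T : H → H) (β ρ θ δ : ℝ) (hβ : β ∈ Set.Ioo (0 : ℝ) 1)
    (hfix : ∃ p : H, T p = p)
    (hT : ∀ (y xs : H), T xs = xs →
      ‖T y - xs‖ ^ 2 ≤ ‖y - xs‖ ^ 2 - ((1 - β) / β) * ‖y - T y‖ ^ 2)
    (hρ : 0 < ρ) (hρβ : ρ < 1 / β)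
    (hθ0 : 0 ≤ θ) (hθ : θ < min (1 / 2) ((1 - β * ρ) / (1 + β * ρ)))
    (hδ0 : δ ≤ 0)
    (hδ1 : max (-((1 - β * ρ - θ - β * θ * ρ) / (1 - β * ρ)))
      ((β * ρ * θ * (1 + θ) - (1 - β * ρ) * (1 - θ) ^ 2) / (1 + θ)) < δ)
    (hδ2 : β * ρ * θ * (1 + θ) - (1 - β * ρ) * (1 - θ) ^ 2 <
      (2 * θ - β * ρ + 2) * δ + (1 - 2 * β * ρ) * δ ^ 2)
    (x y : ℕ → H)
    (hy : ∀ n, y n = x (n + 2) + θ • (x (n + 2) - x (n + 1)) + δ • (x (n + 1) - x n))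
    (hx : ∀ n, x (n + 3) = (1 - ρ) • y n + ρ • T (y n)) :
    (∃ M : ℝ, ∀ n, ‖x n‖ ≤ M) ∧
    Tendsto (fun n => ‖x (n + 1) - x n‖) atTop (nhds 0) := by
  obtain ⟨p, hp⟩ := hfix
  have hβ0 : 0 < β := hβ.1
  have hβρ0 : 0 < β * ρ := mul_pos hβ0 hρ
  have hβρ1 : β * ρ < 1 := by
    have := mul_lt_mul_of_pos_left hρβ hβ0
    rwa [mul_one_div, div_self (ne_of_gt hβ0)] at this
  set κ : ℝ := (1 - β*ρ)/(β*ρ) with hκdef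
  have hκ : 0 ≤ κ := div_nonneg (by linarith) hβρ0.le
  have hθ12 : θ < 1/2 := lt_of_lt_of_le hθ (min_le_left _ _)
  -- δ > -1
  have hδm1 : -1 < δ := by
    have h := lt_of_le_of_lt (le_max_left _ _) hδ1
    have h2 : (1 - β*ρ - θ - β*θ*ρ)/(1 - β*ρ) ≤ 1 := by
      rw [div_le_one (by linarith)]
      nlinarith [mul_nonneg hθ0 hβρ0.le]
    linarith
  -- the Lyapunov-relevant constants
  set CC : ℝ := δ*(δ-θ) - κ*(δ^2+δ+θ*δ) with hCCdef
  set BB : ℝ := ((1+θ)*(θ-δ) - κ*(θ^2-θ+θ*δ)) + CC with hBBdef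
  set EPS : ℝ := κ*(1-θ+δ) - ((1+θ)*(θ-δ) - κ*(θ^2-θ+θ*δ)) - (δ*(δ-θ) - κ*(δ^2+δ+θ*δ))
    with hEPSdef
  have hCC : 0 ≤ CC := by
    rw [hCCdef]
    nlinarith [mul_nonneg (neg_nonneg.mpr hδ0) (sub_nonneg.mpr (le_trans hδ0 hθ0)),
      mul_nonneg (mul_nonneg (neg_nonneg.mpr hδ0) hκ) (show (0:ℝ) ≤ 1+θ+δ by linarith)]
  have hBB : 0 ≤ BB := by
    rw [hBBdef]
    nlinarith [hCC, mul_nonneg (show (0:ℝ) ≤ 1+θ by linarith)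
      (sub_nonneg.mpr (le_trans hδ0 hθ0)),
      mul_nonneg (mul_nonneg hκ hθ0) (show (0:ℝ) ≤ 1-θ-δ by linarith)]
  have hEPS : 0 < EPS := by
    have hq : β*ρ*EPS = ((2*θ - β*ρ + 2)*δ + (1 - 2*β*ρ)*δ^2)
        - (β*ρ*θ*(1+θ) - (1-β*ρ)*(1-θ)^2) := by
      rw [hEPSdef, hκdef]
      field_simp
      ring
    nlinarith [hq, hδ2, hβρ0]
  -- the Lyapunov function
  set G : ℕ → ℝ := fun n => ‖x (n+2) - p‖^2 - θ*‖x (n+1) - p‖^2 - δ*‖x n - p‖^2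
    + BB*‖x (n+2) - x (n+1)‖^2 + CC*‖x (n+1) - x n‖^2 with hGdef
  -- one-step decrease
  have hstep : ∀ n, G (n+1) + EPS*‖x (n+3) - x (n+2)‖^2 ≤ G n := by
    intro n
    have h1 := step_aux T β ρ hβ0 hρ p (y n) (x (n+3)) hp (hT (y n) p hp) (hx n)
    have hyp : y n - p = (x (n+2) - p) + θ•((x (n+2) - p) - (x (n+1) - p))
        + δ•((x (n+1) - p) - (x n - p)) := by rw [hy n]; module
    have hzz : x (n+3) - p - ((x (n+2) - p) + θ•((x (n+2) - p) - (x (n+1) - p))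
        + δ•((x (n+1) - p) - (x n - p))) = x (n+3) - y n := by rw [← hyp]; abel
    rw [hyp] at h1
    rw [← hzz] at h1
    have h2 := master_aux (x n - p) (x (n+1) - p) (x (n+2) - p) (x (n+3) - p)
      θ δ κ hθ0 hδ0 hκ h1
    have r1 : (x (n+2) - p) - (x (n+1) - p) = x (n+2) - x (n+1) := by abel
    have r2 : (x (n+1) - p) - (x n - p) = x (n+1) - x n := by abel
    have r3 : (x (n+3) - p) - (x (n+2) - p) = x (n+3) - x (n+2) := by abel
    rw [r1, r2, r3] at h2
    simp only [hGdef, hBBdef, hCCdef, hEPSdef]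
    have e1 : n+1+2 = n+3 := rfl
    have e2 : n+1+1 = n+2 := rfl
    rw [e1, e2]
    linarith [h2]
  -- G is nonincreasing
  have hGmono : ∀ n, G n ≤ G 0 := by
    intro n
    induction n with
    | zero => exact le_refl _
    | succ k ih =>
      have h0 : 0 ≤ EPS * ‖x (k+3) - x (k+2)‖^2 := mul_nonneg hEPS.le (sq_nonneg _)
      have h1 := hstep k
      linarith
  -- lower bound structure of G
  have hGlow : ∀ n, ‖x (n+2) - p‖^2 - θ*‖x (n+1) - p‖^2 ≤ G n := by
    intro n
    simp only [hGdef]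
    nlinarith [mul_nonneg (neg_nonneg.mpr hδ0) (sq_nonneg ‖x n - p‖),
      mul_nonneg hBB (sq_nonneg ‖x (n+2) - x (n+1)‖),
      mul_nonneg hCC (sq_nonneg ‖x (n+1) - x n‖)]
  -- boundedness of ‖x n - p‖^2
  set M₀ : ℝ := max (max (‖x 1 - p‖^2) (‖x 2 - p‖^2)) (max (G 0) 0 / (1-θ)) with hM₀def
  have hbdd : ∀ n, ‖x (n+1) - p‖^2 ≤ M₀ := by
    intro n
    induction n with
    | zero => exact le_trans (le_max_left _ _) (le_max_left _ _)
    | succ k ih =>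
      have h1 : ‖x (k+2) - p‖^2 - θ*‖x (k+1) - p‖^2 ≤ G 0 := le_trans (hGlow k) (hGmono k)
      have h2 : max (G 0) 0 / (1-θ) ≤ M₀ := le_max_right _ _
      have h3 : max (G 0) 0 ≤ M₀ * (1-θ) := (div_le_iff₀ (by linarith)).mp h2
      have h4 : G 0 ≤ max (G 0) 0 := le_max_left _ _
      have h5 : θ*‖x (k+1) - p‖^2 ≤ θ*M₀ := mul_le_mul_of_nonneg_left ih hθ0
      have e2 : k+1+1 = k+2 := rfl
      rw [e2] at *
      linarith
  have hM₀0 : 0 ≤ M₀ := le_trans (sq_nonneg _) (hbdd 0)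
  constructor
  · -- boundedness of x
    refine ⟨max ‖x 0‖ (Real.sqrt M₀ + ‖p‖), ?_⟩
    intro n
    match n with
    | 0 => exact le_max_left _ _
    | (m+1) =>
      refine le_trans ?_ (le_max_right _ _)
      have h1 : ‖x (m+1) - p‖ ≤ Real.sqrt M₀ := by
        have := hbdd m
        have h2 := Real.sqrt_le_sqrt this
        rwa [Real.sqrt_sq (norm_nonneg _)] at h2
      calc ‖x (m+1)‖ = ‖(x (m+1) - p) + p‖ := by congr 1; abel
        _ ≤ ‖x (m+1) - p‖ + ‖p‖ := norm_add_le _ _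
        _ ≤ Real.sqrt M₀ + ‖p‖ := by linarith
  · -- convergence of differences to 0
    have hGlow2 : ∀ n, -(θ*M₀) ≤ G n := by
      intro n
      have h1 := hGlow n
      have h2 : θ*‖x (n+1) - p‖^2 ≤ θ*M₀ := mul_le_mul_of_nonneg_left (hbdd n) hθ0
      nlinarith [sq_nonneg ‖x (n+2) - p‖]
    have htel : ∀ N, EPS * (∑ k ∈ Finset.range N, ‖x (k+3) - x (k+2)‖^2) ≤ G 0 - G N := by
      intro N
      induction N with
      | zero => simp
      | succ k ih =>
        rw [Finset.sum_range_succ, mul_add]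
        have := hstep k
        linarith
    have hsumbd : ∀ N, (∑ k ∈ Finset.range N, ‖x (k+3) - x (k+2)‖^2)
        ≤ (G 0 + θ*M₀) / EPS := by
      intro N
      rw [le_div_iff₀ hEPS]
      have := htel N
      have := hGlow2 N
      nlinarith
    have hsum : Summable (fun k => ‖x (k+3) - x (k+2)‖^2) :=
      summable_of_sum_range_le (fun n => sq_nonneg _) hsumbd
    have ht0 : Tendsto (fun k => ‖x (k+3) - x (k+2)‖^2) atTop (nhds 0) :=
      hsum.tendsto_atTop_zero
    have hn0 : Tendsto (fun k => ‖x (k+3) - x (k+2)‖) atTop (nhds 0) := by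
      have h1 := (Real.continuous_sqrt.tendsto 0).comp ht0
      rw [Real.sqrt_zero] at h1
      exact h1.congr (fun k => Real.sqrt_sq (norm_nonneg _))
    have h2 : Tendsto (fun n => ‖x (n+2+1) - x (n+2)‖) atTop (nhds 0) := hn0
    exact (tendsto_add_atTop_iff_nat 2).mp h2
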